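/- arXiv:1507.05674 — 4 statements merged into one kernel-verified Lean document; each statement's English description precedes it below -/
import Mathlib

section
/- The action I±(e) tends to 4/π as e tends to 2 from above: lim_{e→2⁺} I±(e) = 4/π, which is one half of lim_{e→2⁻} I₀(e) = 8/π. -/
open Real intervalIntegral

lemma cont_uncurry : Continuous (Function.uncurry fun (e : ℝ) (α : ℝ) =>
    Real.sqrt (2 * (e - 1 + Real.cos α))) := by
  apply Real.continuous_sqrt.comp
  fun_prop

lemma key_integral : (∫ α in (-Real.pi)..Real.pi, Real.sqrt (2 * ((2:ℝ) - 1 + Real.cos α))) = 8 := by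
  have h : Set.EqOn (fun α => Real.sqrt (2 * ((2:ℝ) - 1 + Real.cos α)))
      (fun α => 2 * Real.cos (α / 2)) (Set.uIcc (-Real.pi) Real.pi) := by
    intro α hα
    rw [Set.uIcc_of_le (by linarith [Real.pi_pos])] at hα
    have hc : 0 ≤ Real.cos (α / 2) := by
      apply Real.cos_nonneg_of_mem_Icc
      constructor <;> [linarith [hα.1]; linarith [hα.2]]
    have h1 : 2 * ((2:ℝ) - 1 + Real.cos α) = (2 * Real.cos (α / 2)) ^ 2 := by
      have hh := Real.cos_sq (α / 2)
      rw [show 2 * (α / 2) = α by ring] at hh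
      nlinarith [hh]
    simp only
    rw [h1, Real.sqrt_sq (by positivity)]
  rw [intervalIntegral.integral_congr h]
  have : (∫ α in (-Real.pi)..Real.pi, 2 * Real.cos (α / 2))
      = 2 * ∫ α in (-Real.pi)..Real.pi, Real.cos (α / 2) := by
    rw [intervalIntegral.integral_const_mul]
  rw [this]
  have h2 : (∫ α in (-Real.pi)..Real.pi, Real.cos (α / 2))
      = (2:ℝ) • ∫ α in (-Real.pi/2)..(Real.pi/2), Real.cos α := by
    rw [intervalIntegral.integral_comp_div (fun x => Real.cos x) (c := 2) two_ne_zero]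

  rw [h2, integral_cos]
  simp [Real.sin_pi_div_two, Real.sin_neg, neg_div]
  norm_num

/-- `I±(e) → 4/π` as `e → 2⁺`, which is one half of `lim_{e→2⁻} I₀(e) = 8/π`. -/
theorem stmt_5 :
    Filter.Tendsto
      (fun e : ℝ => (1 / (2 * Real.pi)) *
        ∫ α in (-Real.pi)..Real.pi, Real.sqrt (2 * (e - 1 + Real.cos α)))
      (nhdsWithin 2 (Set.Ioi 2)) (nhds (4 / Real.pi)) ∧
    Filter.Tendsto
      (fun e : ℝ => (1 / Real.pi) *
        ∫ α in (-Real.arccos (1 - e))..(Real.arccos (1 - e)),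
          Real.sqrt (2 * (e - 1 + Real.cos α)))
      (nhdsWithin 2 (Set.Ioo 0 2)) (nhds (8 / Real.pi)) ∧
    (4 / Real.pi : ℝ) = (1 / 2) * (8 / Real.pi) := by
  have hpi := Real.pi_pos
  refine ⟨?_, ?_, by ring⟩
  · have hcont : Continuous (fun e : ℝ =>
        ∫ α in (-Real.pi)..Real.pi, Real.sqrt (2 * (e - 1 + Real.cos α))) :=
      intervalIntegral.continuous_parametric_intervalIntegral_of_continuous'
        cont_uncurry _ _
    have : Filter.Tendsto (fun e : ℝ => (1 / (2 * Real.pi)) *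
        ∫ α in (-Real.pi)..Real.pi, Real.sqrt (2 * (e - 1 + Real.cos α)))
        (nhds 2) (nhds ((1 / (2 * Real.pi)) * 8)) := by
      have := (hcont.tendsto 2).const_mul (1 / (2 * Real.pi))
      simpa only [key_integral] using this
    have h48 : (1 / (2 * Real.pi)) * 8 = 4 / Real.pi := by field_simp; ring
    rw [h48] at this
    exact this.mono_left nhdsWithin_le_nhds
  · set s : ℝ → ℝ := fun e => Real.arccos (1 - e) with hs
    have hscont : Continuous s := Real.continuous_arccos.comp (by fun_prop)
    have hF : ∀ e : ℝ, (∫ α in (-(s e))..(s e), Real.sqrt (2 * (e - 1 + Real.cos α)))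
        = (∫ α in (-(s e))..0, Real.sqrt (2 * (e - 1 + Real.cos α)))
          + ∫ α in (0:ℝ)..(s e), Real.sqrt (2 * (e - 1 + Real.cos α)) := by
      intro e
      rw [intervalIntegral.integral_add_adjacent_intervals]
      · exact (cont_uncurry.comp (Continuous.prodMk_right e)).intervalIntegrable _ _
      · exact (cont_uncurry.comp (Continuous.prodMk_right e)).intervalIntegrable _ _
    have hc1 : Continuous (fun e : ℝ =>
        ∫ α in (0:ℝ)..(s e), Real.sqrt (2 * (e - 1 + Real.cos α))) :=
      intervalIntegral.continuous_parametric_intervalIntegral_of_continuous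
        cont_uncurry hscont
    have hc2 : Continuous (fun e : ℝ =>
        ∫ α in (-(s e))..0, Real.sqrt (2 * (e - 1 + Real.cos α))) := by
      have : Continuous (fun e : ℝ =>
          ∫ α in (0:ℝ)..(-(s e)), Real.sqrt (2 * (e - 1 + Real.cos α))) :=
        intervalIntegral.continuous_parametric_intervalIntegral_of_continuous
          cont_uncurry hscont.neg
      have heq : (fun e : ℝ => ∫ α in (-(s e))..0, Real.sqrt (2 * (e - 1 + Real.cos α)))
          = fun e => -∫ α in (0:ℝ)..(-(s e)), Real.sqrt (2 * (e - 1 + Real.cos α)) := by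
        funext e; rw [intervalIntegral.integral_symm]
      rw [heq]
      exact this.neg
    have hcont : Continuous (fun e : ℝ =>
        ∫ α in (-(s e))..(s e), Real.sqrt (2 * (e - 1 + Real.cos α))) := by
      simp only [hF]
      exact hc2.add hc1
    have hs2 : s 2 = Real.pi := by
      simp [hs, Real.arccos_neg_one, show (1:ℝ) - 2 = -1 by norm_num]
    have : Filter.Tendsto (fun e : ℝ => (1 / Real.pi) *
        ∫ α in (-(s e))..(s e), Real.sqrt (2 * (e - 1 + Real.cos α)))
        (nhds 2) (nhds ((1 / Real.pi) * 8)) := by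
      have := (hcont.tendsto 2).const_mul (1 / Real.pi)
      simpa only [hs2, key_integral] using this
    have h8 : (1 / Real.pi) * 8 = 8 / Real.pi := by ring
    rw [h8] at this
    exact this.mono_left nhdsWithin_le_nhds
end

section
/- Let ℏ > 0 and suppose that 8/π ≠ nℏ for every integer n and 4/π ≠ nℏ for every integer n. Then there exists ε > 0 such that for every e with 2 − ε < e < 2 the value I₀(e) is not an integer multiple of ℏ, and for every e with 2 < e < 2 + ε the value I±(e) is not an integer multiple of ℏ. (Equivalently, the set H⁻¹((2−ε, 2+ε)) contains no Bohr–Sommerfeld tori.) -/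
open Real intervalIntegral

private lemma my_sqrt_add_le (x y : ℝ) (hx : 0 ≤ x) (hy : 0 ≤ y) :
    Real.sqrt (x + y) ≤ Real.sqrt x + Real.sqrt y := by
  have h : x + y ≤ (Real.sqrt x + Real.sqrt y) ^ 2 := by
    rw [add_sq, Real.sq_sqrt hx, Real.sq_sqrt hy]
    nlinarith [Real.sqrt_nonneg x, Real.sqrt_nonneg y]
  calc Real.sqrt (x + y) ≤ Real.sqrt ((Real.sqrt x + Real.sqrt y) ^ 2) :=
        Real.sqrt_le_sqrt h
    _ = Real.sqrt x + Real.sqrt y := Real.sqrt_sq (by positivity)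

private lemma gap (hbar c : ℝ) (hpos : 0 < hbar) (h : ∀ n : ℤ, c ≠ n * hbar) :
    ∃ δ > (0:ℝ), ∀ x : ℝ, |x - c| < δ → ∀ n : ℤ, x ≠ n * hbar := by
  set k : ℤ := ⌊c / hbar⌋ with hk
  have hk1 : (k : ℝ) * hbar ≤ c := by
    rw [← le_div_iff₀ hpos]; exact Int.floor_le _
  have hk2 : c < ((k : ℝ) + 1) * hbar := by
    rw [← div_lt_iff₀ hpos]; exact Int.lt_floor_add_one _
  have h1 : 0 < c - k * hbar := by
    rcases lt_or_eq_of_le hk1 with h' | h'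
    · linarith
    · exact absurd h'.symm (h k)
  refine ⟨min (c - k * hbar) (((k : ℝ) + 1) * hbar - c), lt_min h1 (by linarith), ?_⟩
  intro x hx n hxn
  rw [abs_lt] at hx
  rcases le_or_gt n k with hn | hn
  · have : (n : ℝ) * hbar ≤ (k : ℝ) * hbar := by
      apply mul_le_mul_of_nonneg_right _ hpos.le
      exact_mod_cast hn
    have h2 : min (c - k * hbar) (((k : ℝ) + 1) * hbar - c) ≤ c - k * hbar := min_le_left _ _
    linarith [hx.1]
  · have hn' : (k : ℝ) + 1 ≤ (n : ℝ) := by exact_mod_cast hn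
    have : ((k : ℝ) + 1) * hbar ≤ (n : ℝ) * hbar :=
      mul_le_mul_of_nonneg_right hn' hpos.le
    have h2 : min (c - k * hbar) (((k : ℝ) + 1) * hbar - c) ≤ ((k : ℝ) + 1) * hbar - c :=
      min_le_right _ _
    linarith [hx.2]

private lemma integral_two_cos_half (a : ℝ) :
    ∫ α in (-a)..a, 2 * Real.cos (α / 2) = 8 * Real.sin (a / 2) := by
  rw [intervalIntegral.integral_const_mul]
  rw [intervalIntegral.integral_comp_div (f := Real.cos) (two_ne_zero)]
  rw [integral_cos]
  rw [neg_div, Real.sin_neg]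
  simp [smul_eq_mul]; ring

private lemma two_cos_half_eq (α : ℝ) (h1 : -π ≤ α) (h2 : α ≤ π) :
    2 * Real.cos (α / 2) = Real.sqrt (2 * (1 + Real.cos α)) := by
  rw [Real.cos_half h1 h2,
    show (2:ℝ) * (1 + Real.cos α) = 2 ^ 2 * ((1 + Real.cos α) / 2) by ring,
    Real.sqrt_mul (by positivity), Real.sqrt_sq (by norm_num : (0:ℝ) ≤ 2)]

private lemma cont_int (e a b : ℝ) :
    IntervalIntegrable (fun α => Real.sqrt (2 * (e - 1 + Real.cos α)))
      MeasureTheory.volume a b := by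
  apply Continuous.intervalIntegrable
  exact Real.continuous_sqrt.comp (by continuity)

private lemma cont_int2 (a b : ℝ) :
    IntervalIntegrable (fun α => 2 * Real.cos (α / 2)) MeasureTheory.volume a b := by
  apply Continuous.intervalIntegrable; continuity

private lemma I0_bounds (e : ℝ) (h0 : 0 < e) (h2 : e < 2) :
    8 * Real.sqrt (e/2) - 2*Real.pi*Real.sqrt (2*(2-e)) ≤
      (∫ α in (-Real.arccos (1-e))..(Real.arccos (1-e)), Real.sqrt (2*(e-1+Real.cos α))) ∧
    (∫ α in (-Real.arccos (1-e))..(Real.arccos (1-e)), Real.sqrt (2*(e-1+Real.cos α))) ≤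
      8 * Real.sqrt (e/2) := by
  set a := Real.arccos (1-e) with ha
  have ha0 : 0 ≤ a := Real.arccos_nonneg _
  have haπ : a ≤ π := Real.arccos_le_pi _
  have hcos : Real.cos a = 1 - e := Real.cos_arccos (by linarith) (by linarith)
  have hsin : Real.sin (a/2) = Real.sqrt (e/2) := by
    rw [Real.sin_half_eq_sqrt ha0 (by linarith [Real.pi_pos]), hcos]
    norm_num
  have hmem : ∀ α ∈ Set.Icc (-a) a, -π ≤ α ∧ α ≤ π ∧ Real.cos a ≤ Real.cos α := by
    intro α hα
    obtain ⟨hl, hr⟩ := hα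
    refine ⟨by linarith, by linarith, ?_⟩
    rw [← Real.cos_abs α]
    apply Real.cos_le_cos_of_nonneg_of_le_pi (abs_nonneg _) haπ
    rw [abs_le]; exact ⟨hl, hr⟩
  constructor
  · -- lower bound
    have key : ∀ α ∈ Set.Icc (-a) a,
        2 * Real.cos (α / 2) ≤ Real.sqrt (2*(e-1+Real.cos α)) + Real.sqrt (2*(2-e)) := by
      intro α hα
      obtain ⟨hl, hr, hc⟩ := hmem α hα
      rw [two_cos_half_eq α hl hr,
        show (2:ℝ)*(1+Real.cos α) = 2*(e-1+Real.cos α) + 2*(2-e) by ring]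
      exact my_sqrt_add_le _ _ (by rw [hcos] at hc; linarith) (by linarith)
    have hint : (∫ α in (-a)..a, 2 * Real.cos (α / 2)) ≤
        ∫ α in (-a)..a, (Real.sqrt (2*(e-1+Real.cos α)) + Real.sqrt (2*(2-e))) :=
      intervalIntegral.integral_mono_on (by linarith) (cont_int2 _ _)
        ((cont_int e _ _).add intervalIntegrable_const) key
    rw [integral_two_cos_half, hsin] at hint
    rw [intervalIntegral.integral_add (cont_int e _ _) intervalIntegrable_const,
      intervalIntegral.integral_const, smul_eq_mul] at hint
    have hs : (a - -a) * Real.sqrt (2*(2-e)) ≤ 2*π*Real.sqrt (2*(2-e)) := by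
      apply mul_le_mul_of_nonneg_right (by linarith) (Real.sqrt_nonneg _)
    linarith
  · -- upper bound
    have key : ∀ α ∈ Set.Icc (-a) a,
        Real.sqrt (2*(e-1+Real.cos α)) ≤ 2 * Real.cos (α / 2) := by
      intro α hα
      obtain ⟨hl, hr, _⟩ := hmem α hα
      rw [two_cos_half_eq α hl hr]
      exact Real.sqrt_le_sqrt (by linarith)
    have hint : (∫ α in (-a)..a, Real.sqrt (2*(e-1+Real.cos α))) ≤
        ∫ α in (-a)..a, 2 * Real.cos (α / 2) :=
      intervalIntegral.integral_mono_on (by linarith) (cont_int e _ _) (cont_int2 _ _) key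
    rw [integral_two_cos_half, hsin] at hint
    linarith

private lemma J_bounds (e : ℝ) (h : 2 < e) :
    8 ≤ (∫ α in (-Real.pi)..Real.pi, Real.sqrt (2*(e-1+Real.cos α))) ∧
    (∫ α in (-Real.pi)..Real.pi, Real.sqrt (2*(e-1+Real.cos α))) ≤
      8 + 2*Real.pi*Real.sqrt (2*(e-2)) := by
  have hπ := Real.pi_pos
  have hint8 : (∫ α in (-π)..π, 2 * Real.cos (α / 2)) = 8 := by
    rw [integral_two_cos_half, Real.sin_pi_div_two]; norm_num
  have hmem : ∀ α ∈ Set.Icc (-π) π, -π ≤ α ∧ α ≤ π := fun α hα => ⟨hα.1, hα.2⟩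
  constructor
  · have key : ∀ α ∈ Set.Icc (-π) π,
        2 * Real.cos (α / 2) ≤ Real.sqrt (2*(e-1+Real.cos α)) := by
      intro α hα
      obtain ⟨hl, hr⟩ := hmem α hα
      rw [two_cos_half_eq α hl hr]
      exact Real.sqrt_le_sqrt (by linarith)
    have hint : (∫ α in (-π)..π, 2 * Real.cos (α / 2)) ≤
        ∫ α in (-π)..π, Real.sqrt (2*(e-1+Real.cos α)) :=
      intervalIntegral.integral_mono_on (by linarith) (cont_int2 _ _) (cont_int e _ _) key
    linarith [hint8 ▸ hint]
  · have key : ∀ α ∈ Set.Icc (-π) π,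
        Real.sqrt (2*(e-1+Real.cos α)) ≤ 2 * Real.cos (α / 2) + Real.sqrt (2*(e-2)) := by
      intro α hα
      obtain ⟨hl, hr⟩ := hmem α hα
      rw [two_cos_half_eq α hl hr,
        show (2:ℝ)*(e-1+Real.cos α) = 2*(1+Real.cos α) + 2*(e-2) by ring]
      exact my_sqrt_add_le _ _ (by nlinarith [Real.neg_one_le_cos α]) (by linarith)
    have hint : (∫ α in (-π)..π, Real.sqrt (2*(e-1+Real.cos α))) ≤
        ∫ α in (-π)..π, (2 * Real.cos (α / 2) + Real.sqrt (2*(e-2))) :=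
      intervalIntegral.integral_mono_on (by linarith) (cont_int e _ _)
        ((cont_int2 _ _).add intervalIntegrable_const) key
    rw [intervalIntegral.integral_add (cont_int2 _ _) intervalIntegrable_const,
      hint8, intervalIntegral.integral_const, smul_eq_mul] at hint
    have : (π - -π) * Real.sqrt (2*(e-2)) = 2*π*Real.sqrt (2*(e-2)) := by ring
    linarith [this ▸ hint]


/-- If neither `8/π` nor `4/π` is an integer multiple of `ℏ`, then there is `ε > 0` such that
for `2 − ε < e < 2` the action `I₀(e)` is not an integer multiple of `ℏ`, and for
`2 < e < 2 + ε` the action `I±(e)` is not an integer multiple of `ℏ`; i.e. the band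
`H⁻¹((2−ε, 2+ε))` contains no Bohr–Sommerfeld tori. -/
theorem stmt_10 (hbar : ℝ) (hpos : 0 < hbar)
    (h8 : ∀ n : ℤ, (8 / Real.pi : ℝ) ≠ n * hbar)
    (h4 : ∀ n : ℤ, (4 / Real.pi : ℝ) ≠ n * hbar) :
    ∃ ε > (0 : ℝ),
      (∀ e : ℝ, 2 - ε < e → e < 2 → ∀ n : ℤ,
        (1 / Real.pi) *
          ∫ α in (-Real.arccos (1 - e))..(Real.arccos (1 - e)),
            Real.sqrt (2 * (e - 1 + Real.cos α)) ≠ n * hbar) ∧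
      (∀ e : ℝ, 2 < e → e < 2 + ε → ∀ n : ℤ,
        (1 / (2 * Real.pi)) *
          ∫ α in (-Real.pi)..Real.pi, Real.sqrt (2 * (e - 1 + Real.cos α)) ≠ n * hbar) := by
  obtain ⟨δ8, hδ8pos, hδ8⟩ := gap hbar (8/π) hpos h8
  obtain ⟨δ4, hδ4pos, hδ4⟩ := gap hbar (4/π) hpos h4
  have hπ3 : (3:ℝ) < π := Real.pi_gt_three
  have hπ4 : π < 3.15 := by linarith [Real.pi_lt_d2]
  have hπ := Real.pi_pos
  refine ⟨min (1/2) (min (δ8^2/25) (δ4^2/3)), by positivity, ?_, ?_⟩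
  · intro e he1 he2 n
    set ε := min (1/2) (min (δ8^2/25) (δ4^2/3)) with hε
    have hε1 : ε ≤ 1/2 := min_le_left _ _
    have hε8 : ε ≤ δ8^2/25 := le_trans (min_le_right _ _) (min_le_left _ _)
    have h0 : 0 < e := by linarith
    obtain ⟨hlb, hub⟩ := I0_bounds e h0 he2
    set P := ∫ α in (-Real.arccos (1-e))..(Real.arccos (1-e)),
      Real.sqrt (2*(e-1+Real.cos α)) with hP
    set s := Real.sqrt (e/2) with hs
    set t := Real.sqrt (2*(2-e)) with htdef
    have hεpos : (0:ℝ) < ε :=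
      lt_min (by norm_num) (lt_min (by positivity) (by positivity))
    have hs1 : s ≤ 1 := Real.sqrt_le_one.2 (by linarith)
    have hs2 : e/2 ≤ s := by
      calc e/2 = Real.sqrt ((e/2)^2) := (Real.sqrt_sq (by linarith)).symm
        _ ≤ Real.sqrt (e/2) := Real.sqrt_le_sqrt (by nlinarith)
    have htε : t ≤ Real.sqrt (2*ε) := Real.sqrt_le_sqrt (by linarith)
    have hq : Real.sqrt (2*ε) < 3*δ8/10 := by
      rw [Real.sqrt_lt' (by positivity)]
      nlinarith
    have hre : 2*ε ≤ Real.sqrt (2*ε) := by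
      calc 2*ε = Real.sqrt ((2*ε)^2) := (Real.sqrt_sq (by positivity)).symm
        _ ≤ Real.sqrt (2*ε) := Real.sqrt_le_sqrt (by nlinarith [hε1, hεpos])
    have htnn : 0 ≤ t := Real.sqrt_nonneg _
    have habs : |(1/π)*P - 8/π| < δ8 := by
      rw [show (1/π)*P - 8/π = (P-8)/π by ring, abs_div, abs_of_pos hπ,
        div_lt_iff₀ hπ, abs_lt]
      constructor
      · -- -(δ8*π) < P - 8 ; i.e. 8 - P < δ8*π
        have h1 : 8 - P ≤ 4*(2-e) + 2*π*t := by nlinarith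
        nlinarith
      · -- P - 8 < δ8*π
        nlinarith
    exact hδ8 _ habs n
  · intro e he1 he2 n
    set ε := min (1/2) (min (δ8^2/25) (δ4^2/3)) with hε
    have hε4 : ε ≤ δ4^2/3 := le_trans (min_le_right _ _) (min_le_right _ _)
    obtain ⟨hlb, hub⟩ := J_bounds e he1
    set J := ∫ α in (-Real.pi)..Real.pi, Real.sqrt (2*(e-1+Real.cos α)) with hJ
    set t := Real.sqrt (2*(e-2)) with htdef
    have htε : t ≤ Real.sqrt (2*ε) := Real.sqrt_le_sqrt (by linarith)
    have hq : Real.sqrt (2*ε) < δ4 := by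
      rw [Real.sqrt_lt' hδ4pos]
      nlinarith
    have htnn : 0 ≤ t := Real.sqrt_nonneg _
    have habs : |(1/(2*π))*J - 4/π| < δ4 := by
      rw [show (1/(2*π))*J - 4/π = (J-8)/(2*π) by field_simp; ring, abs_div,
        abs_of_pos (by positivity : (0:ℝ) < 2*π), div_lt_iff₀ (by positivity), abs_lt]
      have h1 : 2*π*t ≤ 2*π*Real.sqrt (2*ε) :=
        mul_le_mul_of_nonneg_left htε (by positivity)
      have h2 : 2*π*Real.sqrt (2*ε) < 2*π*δ4 :=
        mul_lt_mul_of_pos_left hq (by positivity)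
      have h3 : 0 < δ4 * (2*π) := by positivity
      constructor
      · linarith
      · linarith
    exact hδ4 _ habs n
end

section
/- For every e with 0 < e < 2, the reduced action satisfies Ĩ(e) = (1/2) I₀(e), and for every e > 2 it satisfies Ĩ(e) = I±(e). Consequently the Bohr–Sommerfeld condition Ĩ(e) = Mℏ for the reduced system corresponds, upon reconstruction, to the condition I(e) = 2Mℏ for the unreduced pendulum, i.e. to the even quantum spectrum. -/
open Real MeasureTheory Set intervalIntegral

lemma aux_bound (t : ℝ) (h1 : -1 ≤ t) (h2 : t ≤ 1) :
    1 / Real.sqrt (1 - t ^ 2) ≤ (1 - t) ^ (-(1/2) : ℝ) + (1 + t) ^ (-(1/2) : ℝ) := by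
  have ha : (0:ℝ) ≤ 1 - t := by linarith
  have hb : (0:ℝ) ≤ 1 + t := by linarith
  have e1 : (1 - t) ^ (-(1/2) : ℝ) = (Real.sqrt (1 - t))⁻¹ := by
    rw [Real.rpow_neg ha, ← Real.sqrt_eq_rpow]
  have e2 : (1 + t) ^ (-(1/2) : ℝ) = (Real.sqrt (1 + t))⁻¹ := by
    rw [Real.rpow_neg hb, ← Real.sqrt_eq_rpow]
  have hsq : Real.sqrt (1 - t ^ 2) = Real.sqrt (1 - t) * Real.sqrt (1 + t) := by
    rw [← Real.sqrt_mul ha]; ring_nf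
  rw [e1, e2, hsq, one_div, mul_inv]
  rcases le_total t 0 with ht | ht
  · have h1le : (1:ℝ) ≤ Real.sqrt (1 - t) := by
      have := Real.sqrt_le_sqrt (show (1:ℝ) ≤ 1 - t by linarith)
      rwa [Real.sqrt_one] at this
    have hm : (Real.sqrt (1 - t))⁻¹ * (Real.sqrt (1 + t))⁻¹ ≤ (Real.sqrt (1 + t))⁻¹ :=
      mul_le_of_le_one_left (by positivity) (inv_le_one_of_one_le₀ h1le)
    have h0 : (0:ℝ) ≤ (Real.sqrt (1 - t))⁻¹ := by positivity
    linarith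
  · have h1le : (1:ℝ) ≤ Real.sqrt (1 + t) := by
      have := Real.sqrt_le_sqrt (show (1:ℝ) ≤ 1 + t by linarith)
      rwa [Real.sqrt_one] at this
    have hm : (Real.sqrt (1 - t))⁻¹ * (Real.sqrt (1 + t))⁻¹ ≤ (Real.sqrt (1 - t))⁻¹ :=
      mul_le_of_le_one_right (by positivity) (inv_le_one_of_one_le₀ h1le)
    have h0 : (0:ℝ) ≤ (Real.sqrt (1 + t))⁻¹ := by positivity
    linarith

lemma aux_integrableOn (e : ℝ) :
    IntegrableOn (fun t => Real.sqrt (2 * (e + t - 1)) / Real.sqrt (1 - t ^ 2))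
      (Set.Icc (-1 : ℝ) 1) volume := by
  have h1 : IntervalIntegrable (fun x : ℝ => (1 - x) ^ (-(1/2) : ℝ)) volume (-1) 1 := by
    have := (intervalIntegrable_rpow' (a := -2) (b := 2)
      (r := (-(1/2) : ℝ)) (by norm_num)).comp_sub_left 1
    refine this.mono_set ?_
    rw [Set.uIcc_of_le (by norm_num : (-1:ℝ) ≤ 1),
      show (1:ℝ) - (-2) = 3 by norm_num, show (1:ℝ) - 2 = -1 by norm_num,
      Set.uIcc_of_ge (by norm_num : (-1:ℝ) ≤ 3)]
    exact Set.Icc_subset_Icc (le_refl _) (by norm_num)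
  have h2 : IntervalIntegrable (fun x : ℝ => (1 + x) ^ (-(1/2) : ℝ)) volume (-1) 1 := by
    have := (intervalIntegrable_rpow' (a := -2) (b := 2)
      (r := (-(1/2) : ℝ)) (by norm_num)).comp_add_left 1
    refine this.mono_set ?_
    rw [Set.uIcc_of_le (by norm_num : (-1:ℝ) ≤ 1),
      show (-2:ℝ) - 1 = -3 by norm_num, show (2:ℝ) - 1 = 1 by norm_num,
      Set.uIcc_of_le (by norm_num : (-3:ℝ) ≤ 1)]
    exact Set.Icc_subset_Icc (by norm_num) (le_refl _)
  have hmaj : IntegrableOn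
      (fun t : ℝ => Real.sqrt (2 * e) * ((1 - t) ^ (-(1/2) : ℝ) + (1 + t) ^ (-(1/2) : ℝ)))
      (Set.Icc (-1 : ℝ) 1) volume := by
    have := ((h1.add h2).const_mul (Real.sqrt (2 * e)))
    rw [intervalIntegrable_iff'] at this
    rwa [Set.uIcc_of_le (by norm_num : (-1:ℝ) ≤ 1)] at this
  have hmeas : AEStronglyMeasurable
      (fun t : ℝ => Real.sqrt (2 * (e + t - 1)) / Real.sqrt (1 - t ^ 2))
      (volume.restrict (Set.Icc (-1 : ℝ) 1)) := by
    apply Measurable.aestronglyMeasurable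
    exact (Real.continuous_sqrt.comp (by continuity)).measurable.div
      (Real.continuous_sqrt.comp (by continuity)).measurable
  refine Integrable.mono hmaj hmeas ?_
  filter_upwards [ae_restrict_mem measurableSet_Icc] with t ht
  obtain ⟨ht1, ht2⟩ := ht
  have hg0 : (0:ℝ) ≤ Real.sqrt (2 * (e + t - 1)) / Real.sqrt (1 - t ^ 2) := by positivity
  have hrhs0 : (0:ℝ) ≤ Real.sqrt (2 * e) * ((1 - t) ^ (-(1/2) : ℝ) + (1 + t) ^ (-(1/2) : ℝ)) :=
    mul_nonneg (Real.sqrt_nonneg _)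
      (add_nonneg (Real.rpow_nonneg (by linarith) _) (Real.rpow_nonneg (by linarith) _))
  rw [Real.norm_eq_abs, Real.norm_eq_abs, abs_of_nonneg hg0, abs_of_nonneg hrhs0]
  have step1 : Real.sqrt (2 * (e + t - 1)) / Real.sqrt (1 - t ^ 2)
      ≤ Real.sqrt (2 * e) / Real.sqrt (1 - t ^ 2) :=
    div_le_div_of_nonneg_right (Real.sqrt_le_sqrt (by linarith)) (Real.sqrt_nonneg _)
  have step2 : Real.sqrt (2 * e) / Real.sqrt (1 - t ^ 2)
      ≤ Real.sqrt (2 * e) * ((1 - t) ^ (-(1/2) : ℝ) + (1 + t) ^ (-(1/2) : ℝ)) := by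
    rw [div_eq_mul_one_div]
    exact mul_le_mul_of_nonneg_left (aux_bound t ht1 ht2) (Real.sqrt_nonneg _)
  linarith

lemma aux_ae_ne (c : ℝ) : ∀ᵐ x : ℝ, x ≠ c := by
  refine MeasureTheory.ae_iff.mpr ?_
  simp [Real.volume_singleton]

lemma aux_even (e b : ℝ) :
    ∫ α in (-b)..b, Real.sqrt (2 * (e - 1 + Real.cos α))
      = 2 * ∫ α in (0:ℝ)..b, Real.sqrt (2 * (e - 1 + Real.cos α)) := by
  have hc : Continuous fun α : ℝ => Real.sqrt (2 * (e - 1 + Real.cos α)) :=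
    Real.continuous_sqrt.comp (by continuity)
  have h1 : ∫ α in (-b)..(0:ℝ), Real.sqrt (2 * (e - 1 + Real.cos α))
      = ∫ α in (0:ℝ)..b, Real.sqrt (2 * (e - 1 + Real.cos α)) := by
    have h := intervalIntegral.integral_comp_neg (a := (0:ℝ)) (b := b)
      (f := fun α => Real.sqrt (2 * (e - 1 + Real.cos α)))
    simp only [Real.cos_neg, neg_zero] at h
    exact h.symm
  rw [← intervalIntegral.integral_add_adjacent_intervals
    (hc.intervalIntegrable (-b) 0) (hc.intervalIntegrable 0 b), h1]
  ring

lemma aux_subst (e b : ℝ) (hb0 : 0 < b) (hbπ : b ≤ Real.pi) :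
    ∫ t in (Real.cos b)..1, Real.sqrt (2 * (e + t - 1)) / Real.sqrt (1 - t ^ 2)
      = ∫ α in (0:ℝ)..b, Real.sqrt (2 * (e - 1 + Real.cos α)) := by
  set g : ℝ → ℝ := fun t => Real.sqrt (2 * (e + t - 1)) / Real.sqrt (1 - t ^ 2) with hg
  have hmin : min 0 b = 0 := min_eq_left hb0.le
  have hmax : max 0 b = b := max_eq_right hb0.le
  have himgIoo : Real.cos '' Set.Ioo 0 b ⊆ Set.Ioo (-1 : ℝ) 1 := by
    rintro _ ⟨x, hx, rfl⟩
    have hxpi : x < Real.pi := lt_of_lt_of_le hx.2 hbπ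
    constructor
    · calc (-1:ℝ) = Real.cos Real.pi := (Real.cos_pi).symm
        _ < Real.cos x := Real.cos_lt_cos_of_nonneg_of_le_pi hx.1.le le_rfl hxpi
    · calc Real.cos x < Real.cos 0 :=
          Real.cos_lt_cos_of_nonneg_of_le_pi le_rfl hxpi.le hx.1
        _ = 1 := Real.cos_zero
  have hptwise : ∀ x ∈ Set.Ioo 0 b,
      (-Real.sin x) • (g ∘ Real.cos) x = -Real.sqrt (2 * (e - 1 + Real.cos x)) := by
    intro x hx
    have hsin : 0 < Real.sin x :=
      Real.sin_pos_of_pos_of_lt_pi hx.1 (lt_of_lt_of_le hx.2 hbπ)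
    have hden : Real.sqrt (1 - Real.cos x ^ 2) = Real.sin x := by
      rw [show 1 - Real.cos x ^ 2 = Real.sin x ^ 2 by
          have := Real.sin_sq_add_cos_sq x; linarith]
      exact Real.sqrt_sq hsin.le
    simp only [g, Function.comp_apply, smul_eq_mul, hden]
    rw [show 2 * (e + Real.cos x - 1) = 2 * (e - 1 + Real.cos x) by ring]
    field_simp
  have key := intervalIntegral.integral_comp_smul_deriv''' (a := 0) (b := b)
    (f := Real.cos) (f' := fun x => -Real.sin x) (g := g)
    (Real.continuous_cos.continuousOn)
    (by
      intro x hx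
      rw [hmin, hmax] at hx
      exact (Real.hasDerivAt_cos x).hasDerivWithinAt)
    (by
      rw [hmin, hmax]
      refine ContinuousOn.mono ?_ himgIoo
      apply ContinuousOn.div
      · exact (Real.continuous_sqrt.comp (by continuity)).continuousOn
      · exact (Real.continuous_sqrt.comp (by continuity)).continuousOn
      · intro t ht
        have : 0 < 1 - t ^ 2 := by nlinarith [ht.1, ht.2]
        positivity)
    (by
      refine (aux_integrableOn e).mono_set ?_
      rintro _ ⟨x, _, rfl⟩
      exact ⟨Real.neg_one_le_cos x, Real.cos_le_one x⟩)
    (by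
      have hcont : Continuous fun x => -Real.sqrt (2 * (e - 1 + Real.cos x)) :=
        (Real.continuous_sqrt.comp (by continuity)).neg
      have hI : IntegrableOn (fun x => -Real.sqrt (2 * (e - 1 + Real.cos x)))
          (Set.uIcc 0 b) volume := hcont.integrableOn_uIcc
      have hae : (fun x => -Real.sqrt (2 * (e - 1 + Real.cos x)))
          =ᵐ[volume.restrict (Set.uIcc 0 b)]
          (fun x => (-Real.sin x) • (g ∘ Real.cos) x) := by
        filter_upwards [ae_restrict_mem measurableSet_uIcc,
          ae_restrict_of_ae (aux_ae_ne (0:ℝ)), ae_restrict_of_ae (aux_ae_ne b)]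
          with x hx h0 hb'
        rw [Set.uIcc_of_le hb0.le] at hx
        exact (hptwise x ⟨lt_of_le_of_ne hx.1 (Ne.symm h0), lt_of_le_of_ne hx.2 hb'⟩).symm
      exact hI.congr hae)
  have hleft : ∫ x in (0:ℝ)..b, (-Real.sin x) • (g ∘ Real.cos) x
      = ∫ x in (0:ℝ)..b, -Real.sqrt (2 * (e - 1 + Real.cos x)) := by
    apply intervalIntegral.integral_congr_ae
    filter_upwards [aux_ae_ne b] with x hxb hxI
    rw [Set.uIoc_of_le hb0.le] at hxI
    exact hptwise x ⟨hxI.1, lt_of_le_of_ne hxI.2 hxb⟩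
  have h2 : ∫ u in (Real.cos 0)..(Real.cos b), g u
      = -∫ α in (0:ℝ)..b, Real.sqrt (2 * (e - 1 + Real.cos α)) := by
    rw [← key, hleft, intervalIntegral.integral_neg]
  rw [Real.cos_zero] at h2
  rw [intervalIntegral.integral_symm 1 (Real.cos b), h2, neg_neg]

/-- The reduced action satisfies `Ĩ(e) = ½ I₀(e)` for `0 < e < 2` and `Ĩ(e) = I±(e)` for
`e > 2`; consequently the reduced Bohr–Sommerfeld condition `Ĩ(e) = Mℏ` corresponds, upon
reconstruction, to `I(e) = 2Mℏ` for the unreduced pendulum, i.e. to the even quantum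
spectrum. -/
theorem stmt_17 (I₀ Ipm Itil I : ℝ → ℝ)
    (hI₀ : ∀ e : ℝ, I₀ e = (1 / Real.pi) *
      ∫ α in (-Real.arccos (1 - e))..(Real.arccos (1 - e)),
        Real.sqrt (2 * (e - 1 + Real.cos α)))
    (hIpm : ∀ e : ℝ, Ipm e = (1 / (2 * Real.pi)) *
      ∫ α in (-Real.pi)..Real.pi, Real.sqrt (2 * (e - 1 + Real.cos α)))
    (hItil : ∀ e : ℝ, Itil e = (1 / Real.pi) *
      ∫ t in (max (1 - e) (-1))..1, Real.sqrt (2 * (e + t - 1)) / Real.sqrt (1 - t ^ 2))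
    (hIlt : ∀ e : ℝ, 0 < e → e < 2 → I e = I₀ e)
    (hIgt : ∀ e : ℝ, 2 < e → I e = 2 * Ipm e) :
    (∀ e : ℝ, 0 < e → e < 2 → Itil e = (1 / 2) * I₀ e) ∧
    (∀ e : ℝ, 2 < e → Itil e = Ipm e) ∧
    (∀ (hbar : ℝ) (M : ℤ) (e : ℝ), 0 < e → e ≠ 2 →
      (Itil e = M * hbar ↔ I e = 2 * M * hbar)) := by
  have part1 : ∀ e : ℝ, 0 < e → e < 2 → Itil e = (1/2) * I₀ e := by
    intro e he h2
    have hb0 : 0 < Real.arccos (1 - e) := Real.arccos_pos.2 (by linarith)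
    have hbπ : Real.arccos (1 - e) ≤ Real.pi := Real.arccos_le_pi _
    have hcb : Real.cos (Real.arccos (1 - e)) = 1 - e :=
      Real.cos_arccos (by linarith) (by linarith)
    have hmx : max (1 - e) (-1 : ℝ) = 1 - e := max_eq_left (by linarith)
    have hsub := aux_subst e (Real.arccos (1 - e)) hb0 hbπ
    rw [hcb] at hsub
    rw [hItil, hI₀, hmx, hsub, aux_even]
    ring
  have part2 : ∀ e : ℝ, 2 < e → Itil e = Ipm e := by
    intro e he
    have hmx : max (1 - e) (-1 : ℝ) = -1 := max_eq_right (by linarith)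
    have hsub := aux_subst e Real.pi Real.pi_pos le_rfl
    rw [Real.cos_pi] at hsub
    rw [hItil, hIpm, hmx, hsub, aux_even]
    ring
  refine ⟨part1, part2, ?_⟩
  intro hbar M e he hne
  rcases lt_or_gt_of_ne hne with hlt | hgt
  · have h1 := part1 e he hlt
    rw [hIlt e he hlt]
    constructor <;> intro h <;> linarith
  · have h1 := part2 e hgt
    rw [hIgt e hgt]
    constructor <;> intro h <;> linarith
end

section
/- Let ς: (ℝ² ∖ {0}) × (ℝ × (ℝ/2πℤ)) → ℝ⁸ be given by ς((x,y),(p,α)) = (cos α, p sin α, p²/2 − cos α + 1, x², y², xy, xp, yp). Then the image under ς of the set L^∨ = {((x,y),(p,α)) : (x,y) ≠ (0,0) and p ≠ 0} is exactly the set 𝒫^∨ of all (τ,σ) ∈ ℝ³ × ℝ⁵ satisfying the relations (1/2)τ₂² = (τ₁ + τ₃ − 1)(1 − τ₁²), σ₃² = σ₁σ₂, (1/2)σ₄² = (τ₁ + τ₃ − 1)σ₁, (1/2)σ₅² = (τ₁ + τ₃ − 1)σ₂, (1/2)σ₄σ₅ = (τ₁ + τ₃ − 1)σ₃, together with |τ₁|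 ≤ 1, τ₃ ≥ 0, σ₁ ≥ 0, σ₂ ≥ 0, and τ₁ + τ₃ − 1 ≠ 0, (σ₁,σ₂,σ₃) ≠ (0,0,0), (σ₄,σ₅) ≠ (0,0). -/
/-- The Hilbert (orbit) map `ς` of the ℤ₂-action on the prequantum line bundle
`L = ℂ × T*S¹` (−1-representation) sends the set `L^∨ = {(x,y) ≠ 0, p ≠ 0}` exactly onto the
smooth part `𝒫^∨` of the orbit space, described by the invariants' relations together with
`|τ₁| ≤ 1`, `τ₃ ≥ 0`, `σ₁,σ₂ ≥ 0`, `τ₁ + τ₃ − 1 ≠ 0`, `(σ₁,σ₂,σ₃) ≠ 0`, `(σ₄,σ₅) ≠ 0`. -/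
theorem stmt_19
    (ς : (ℝ × ℝ) × (ℝ × Real.Angle) → (ℝ × ℝ × ℝ) × (ℝ × ℝ × ℝ × ℝ × ℝ))
    (hς : ∀ (x y p : ℝ) (α : Real.Angle),
      ς ((x, y), (p, α)) =
        ((α.cos, p * α.sin, p ^ 2 / 2 - α.cos + 1),
         (x ^ 2, y ^ 2, x * y, x * p, y * p))) :
    ς '' {w : (ℝ × ℝ) × (ℝ × Real.Angle) | w.1 ≠ (0, 0) ∧ w.2.1 ≠ 0} =
      {v : (ℝ × ℝ × ℝ) × (ℝ × ℝ × ℝ × ℝ × ℝ) |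
        ∃ τ1 τ2 τ3 σ1 σ2 σ3 σ4 σ5 : ℝ,
          v = ((τ1, τ2, τ3), (σ1, σ2, σ3, σ4, σ5)) ∧
          (1 / 2) * τ2 ^ 2 = (τ1 + τ3 - 1) * (1 - τ1 ^ 2) ∧
          σ3 ^ 2 = σ1 * σ2 ∧
          (1 / 2) * σ4 ^ 2 = (τ1 + τ3 - 1) * σ1 ∧
          (1 / 2) * σ5 ^ 2 = (τ1 + τ3 - 1) * σ2 ∧
          (1 / 2) * (σ4 * σ5) = (τ1 + τ3 - 1) * σ3 ∧
          |τ1| ≤ 1 ∧ 0 ≤ τ3 ∧ 0 ≤ σ1 ∧ 0 ≤ σ2 ∧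
          τ1 + τ3 - 1 ≠ 0 ∧
          (σ1, σ2, σ3) ≠ ((0 : ℝ), (0 : ℝ), (0 : ℝ)) ∧
          (σ4, σ5) ≠ ((0 : ℝ), (0 : ℝ))} := by
  ext v
  simp only [Set.mem_image, Set.mem_setOf_eq]
  constructor
  · rintro ⟨⟨⟨x, y⟩, p, α⟩, ⟨hxy, hp⟩, rfl⟩
    rw [hς]
    have hcs := α.cos_sq_add_sin_sq
    have hxy' : x ≠ 0 ∨ y ≠ 0 := by
      by_contra h
      push_neg at h
      exact hxy (by simp [h.1, h.2])
    have hp2 : 0 < p ^ 2 := by positivity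
    refine ⟨α.cos, p * α.sin, p ^ 2 / 2 - α.cos + 1, x ^ 2, y ^ 2, x * y, x * p, y * p,
      rfl, by ring_nf; nlinarith, by ring, by ring, by ring, by ring, ?_, ?_, by positivity,
      by positivity, by nlinarith, ?_, ?_⟩
    · rw [abs_le]; constructor <;> nlinarith
    · nlinarith [α.cos_sq_add_sin_sq, sq_nonneg α.cos, sq_nonneg (α.cos - 1)]
    · intro hcon
      simp only [Prod.mk.injEq] at hcon
      rcases hxy' with h | h
      · exact h ((pow_eq_zero_iff two_ne_zero).mp hcon.1)
      · exact h ((pow_eq_zero_iff two_ne_zero).mp hcon.2.1)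
    · intro hcon
      simp only [Prod.mk.injEq] at hcon
      rcases hxy' with h | h
      · rcases mul_eq_zero.mp hcon.1 with h' | h' <;> [exact h h'; exact hp h']
      · rcases mul_eq_zero.mp hcon.2 with h' | h' <;> [exact h h'; exact hp h']
  · rintro ⟨τ1, τ2, τ3, σ1, σ2, σ3, σ4, σ5, rfl, h1, h2, h3, h4, h5, h6, h7, h8, h9, h10, h11, h12⟩
    have hσ45 : σ4 ≠ 0 ∨ σ5 ≠ 0 := by
      by_contra h; push_neg at h; exact h12 (by simp [h.1, h.2])
    have hcpos : 0 < τ1 + τ3 - 1 := by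
      rcases hσ45 with h | h
      · nlinarith [pow_pos (abs_pos.mpr h) 2, sq_abs σ4]
      · nlinarith [pow_pos (abs_pos.mpr h) 2, sq_abs σ5]
    obtain ⟨p, hppos, hpsq⟩ : ∃ p : ℝ, 0 < p ∧ p ^ 2 = 2 * (τ1 + τ3 - 1) :=
      ⟨Real.sqrt (2 * (τ1 + τ3 - 1)), Real.sqrt_pos.mpr (by linarith),
        Real.sq_sqrt (by linarith)⟩
    have ht1 : -1 ≤ τ1 ∧ τ1 ≤ 1 := abs_le.mp h6
    obtain ⟨θ, hθc, hθs⟩ : ∃ θ : ℝ, Real.cos θ = τ1 ∧ p * Real.sin θ = τ2 := by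
      rcases le_or_gt 0 τ2 with h | h
      · refine ⟨Real.arccos τ1, Real.cos_arccos ht1.1 ht1.2, ?_⟩
        rw [Real.sin_arccos]
        rw [← Real.sqrt_sq hppos.le, ← Real.sqrt_mul (sq_nonneg p)]
        rw [show p ^ 2 * (1 - τ1 ^ 2) = τ2 ^ 2 by
          linear_combination (1 - τ1 ^ 2) * hpsq - 2 * h1]
        exact Real.sqrt_sq h
      · refine ⟨-Real.arccos τ1, by rw [Real.cos_neg]; exact Real.cos_arccos ht1.1 ht1.2, ?_⟩
        rw [Real.sin_neg, Real.sin_arccos, mul_neg]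
        rw [← Real.sqrt_sq hppos.le, ← Real.sqrt_mul (sq_nonneg p)]
        rw [show p ^ 2 * (1 - τ1 ^ 2) = τ2 ^ 2 by
          linear_combination (1 - τ1 ^ 2) * hpsq - 2 * h1]
        rw [Real.sqrt_sq_eq_abs, abs_of_neg h]; ring
    have hpne : p ≠ 0 := hppos.ne'
    refine ⟨((σ4 / p, σ5 / p), (p, (θ : Real.Angle))), ⟨?_, hpne⟩, ?_⟩
    · intro hcon
      rw [Prod.mk.injEq] at hcon
      rcases hσ45 with h | h
      · exact h ((div_eq_zero_iff.mp hcon.1).resolve_right hpne)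
      · exact h ((div_eq_zero_iff.mp hcon.2).resolve_right hpne)
    · rw [hς]
      have hcos : (θ : Real.Angle).cos = τ1 := by rw [Real.Angle.cos_coe, hθc]
      have hsin : p * (θ : Real.Angle).sin = τ2 := by rw [Real.Angle.sin_coe, hθs]
      simp only [Prod.mk.injEq]
      refine ⟨⟨hcos, hsin, ?_⟩, ?_, ?_, ?_, ?_, ?_⟩
      · rw [hcos, hpsq]; ring
      · field_simp; linear_combination 2 * h3 - σ1 * hpsq
      · field_simp; linear_combination 2 * h4 - σ2 * hpsq
      · field_simp; linear_combination 2 * h5 - σ3 * hpsq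
      · field_simp
      · field_simp
end
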